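/- For the cycle graph C_3 on three vertices with single-peaked preferences, every sequential Pareto rule is false-name-proof and Pareto efficient. -/

import Mathlib

namespace FNPFL

variable {V : Type*}

/-- Single-peaked Pareto domination: `v` dominates `w` under profile `θ`
(agents prefer smaller distance). -/
def Dom (d : V → V → ℕ) (θ : Multiset V) (v w : V) : Prop :=
  (∀ i ∈ θ, d i v ≤ d i w) ∧ ∃ i ∈ θ, d i v < d i w

/-- `w` is Pareto efficient under `θ` (single-peaked). -/
def IsPE (d : V → V → ℕ) (θ : Multiset V) (w : V) : Prop :=
  ∀ v, ¬ Dom d θ v w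

/-- A social choice function is Pareto efficient (single-peaked). -/
def ParetoEfficient (d : V → V → ℕ) (f : Multiset V → V) : Prop :=
  ∀ θ : Multiset V, θ ≠ 0 → IsPE d θ (f θ)

/-- False-name-proofness (single-peaked): an agent `i ∈ θ` replaces her report by
any nonempty multiset `fake` of reports (a misreport plus possibly extra fake
identities) and cannot obtain an outcome strictly closer to her true location. -/
def FalseNameProof [DecidableEq V] (d : V → V → ℕ) (f : Multiset V → V) : Prop :=
  ∀ θ : Multiset V, ∀ i ∈ θ, ∀ fake : Multiset V, fake ≠ 0 →
    d i (f θ) ≤ d i (f (θ.erase i + fake))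

/-- Truthfulness (single-peaked): no agent benefits by a single misreport. -/
def Truthful [DecidableEq V] (d : V → V → ℕ) (f : Multiset V → V) : Prop :=
  ∀ θ : Multiset V, ∀ i ∈ θ, ∀ x : V,
    d i (f θ) ≤ d i (f (θ.erase i + {x}))

/-- `f` is the sequential Pareto rule with ordering `σ` (single-peaked):
on every nonempty profile it outputs the first Pareto efficient vertex in `σ`. -/
def SeqParetoRule (d : V → V → ℕ) (σ : List V) (f : Multiset V → V) : Prop :=
  ∀ θ : Multiset V, θ ≠ 0 →
    ∃ l₁ l₂, σ = l₁ ++ f θ :: l₂ ∧ IsPE d θ (f θ) ∧ ∀ u ∈ l₁, ¬ IsPE d θ u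

/-- Single-dipped Pareto domination: `v` dominates `w` under `θ`
(agents prefer larger distance). -/
def DomD (d : V → V → ℕ) (θ : Multiset V) (v w : V) : Prop :=
  (∀ i ∈ θ, d i w ≤ d i v) ∧ ∃ i ∈ θ, d i w < d i v

/-- `w` is Pareto efficient under `θ` (single-dipped). -/
def IsPED (d : V → V → ℕ) (θ : Multiset V) (w : V) : Prop :=
  ∀ v, ¬ DomD d θ v w

/-- Pareto efficiency of an SCF (single-dipped). -/
def ParetoEfficientD (d : V → V → ℕ) (f : Multiset V → V) : Prop :=
  ∀ θ : Multiset V, θ ≠ 0 → IsPED d θ (f θ)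

/-- False-name-proofness (single-dipped): no agent can obtain an outcome strictly
farther from her true location by misreporting and/or adding fake identities. -/
def FalseNameProofD [DecidableEq V] (d : V → V → ℕ) (f : Multiset V → V) : Prop :=
  ∀ θ : Multiset V, ∀ i ∈ θ, ∀ fake : Multiset V, fake ≠ 0 →
    d i (f (θ.erase i + fake)) ≤ d i (f θ)

/-- Sequential Pareto rule with ordering `σ` (single-dipped). -/
def SeqParetoRuleD (d : V → V → ℕ) (σ : List V) (f : Multiset V → V) : Prop :=
  ∀ θ : Multiset V, θ ≠ 0 →
    ∃ l₁ l₂, σ = l₁ ++ f θ :: l₂ ∧ IsPED d θ (f θ) ∧ ∀ u ∈ l₁, ¬ IsPED d θ u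

/-- Graph distance on the cycle `C_k` with vertices `ZMod k`. -/
def cycleDist (k : ℕ) (v w : ZMod k) : ℕ := min (v - w).val (w - v).val

/-- Manhattan (= graph) distance on a 2-dimensional grid. -/
def gridDist {l m : ℕ} (u v : Fin l × Fin m) : ℕ :=
  Nat.dist u.1.val v.1.val + Nat.dist u.2.val v.2.val

end FNPFL

open FNPFL

lemma cd3 (v w : ZMod 3) : cycleDist 3 v w = if v = w then 0 else 1 := by
  revert v w; decide

lemma first_unique {α : Type*} [DecidableEq α] {σ l₁ l₂ l₁' l₂' : List α} {a b : α}
    (hnd : σ.Nodup) (h1 : σ = l₁ ++ a :: l₂) (h2 : σ = l₁' ++ b :: l₂')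
    (ha : a ∉ l₁') (hb : b ∉ l₁) : a = b := by
  by_contra hne
  have hnd1 : (l₁ ++ a :: l₂).Nodup := h1 ▸ hnd
  have hnd2 : (l₁' ++ b :: l₂').Nodup := h2 ▸ hnd
  have ha1 : a ∉ l₁ := fun h => (List.disjoint_of_nodup_append hnd1 h) (List.mem_cons_self (a := a) (l := l₂))
  have hb1 : b ∉ l₁' := fun h => (List.disjoint_of_nodup_append hnd2 h) (List.mem_cons_self (a := b) (l := l₂'))
  have ia : σ.idxOf a = l₁.length := by
    rw [h1, List.idxOf_append_of_notMem ha1, List.idxOf_cons_self]; simp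
  have ib : σ.idxOf b = l₁'.length := by
    rw [h2, List.idxOf_append_of_notMem hb1, List.idxOf_cons_self]; simp
  have ia' : l₁'.length < σ.idxOf a := by
    rw [h2, List.idxOf_append_of_notMem ha, List.idxOf_cons_ne _ (Ne.symm hne)]
    omega
  have ib' : l₁.length < σ.idxOf b := by
    rw [h1, List.idxOf_append_of_notMem hb, List.idxOf_cons_ne _ hne]
    omega
  omega

lemma isPE_iff {θ : Multiset (ZMod 3)} (hθ : θ ≠ 0) (w : ZMod 3) :
    IsPE (cycleDist 3) θ w ↔ w ∈ θ := by
  constructor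
  · intro h
    by_contra hw
    obtain ⟨v, hv⟩ := Multiset.exists_mem_of_ne_zero hθ
    have hvw : v ≠ w := fun e => hw (e ▸ hv)
    exact h v ⟨fun i hi => by
        have hiw : i ≠ w := fun e => hw (e ▸ hi)
        simp only [cd3, if_neg hiw]
        split <;> omega, v, hv, by simp [cd3, hvw]⟩
  · intro hw v ⟨hall, i, hi, hlt⟩
    rw [cd3, cd3] at hlt
    have hiv : i = v := by by_contra h; rw [if_neg h] at hlt; split at hlt <;> omega
    have hvw : v ≠ w := by rintro rfl; simp at hlt
    have := hall w hw
    rw [cd3, cd3, if_pos rfl, if_neg (Ne.symm hvw)] at this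
    omega

/-- on the cycle `C_3` with single-peaked preferences, every
sequential Pareto rule is false-name-proof and Pareto efficient. -/
theorem stmt2 (σ : List (ZMod 3)) (hσnd : σ.Nodup) (hσall : ∀ v : ZMod 3, v ∈ σ)
    (f : Multiset (ZMod 3) → ZMod 3) (hf : SeqParetoRule (cycleDist 3) σ f) :
    FalseNameProof (cycleDist 3) f ∧ ParetoEfficient (cycleDist 3) f := by
  have hPE : ParetoEfficient (cycleDist 3) f := by
    intro θ hθ
    obtain ⟨l₁, l₂, _, hpe, _⟩ := hf θ hθ
    exact hpe
  refine ⟨?_, hPE⟩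
  intro θ i hi fake hfake
  set θ' := θ.erase i + fake with hθ'
  have hθne : θ ≠ 0 := by rintro rfl; simp at hi
  have hθ'ne : θ' ≠ 0 := by
    intro h
    apply hfake
    have := congrArg Multiset.card h
    rw [hθ', Multiset.card_add, Multiset.card_zero] at this
    exact Multiset.card_eq_zero.mp (by omega)
  obtain ⟨l₁, l₂, h1, hpe1, hmin1⟩ := hf θ hθne
  obtain ⟨l₁', l₂', h2, hpe2, hmin2⟩ := hf θ' hθ'ne
  by_cases hcase : f θ' = i
  · have hfθ : f θ ∈ θ := (isPE_iff hθne _).1 hpe1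
    have heq : f θ = i := by
      by_cases h : f θ = i
      · exact h
      · have hmem' : f θ ∈ θ' := Multiset.mem_add.2 (Or.inl ((Multiset.mem_erase_of_ne h).2 hfθ))
        refine first_unique hσnd h1 (hcase ▸ h2) ?_ ?_
        · intro hmem
          exact hmin2 _ hmem ((isPE_iff hθ'ne _).2 hmem')
        · intro hmem
          exact hmin1 _ hmem ((isPE_iff hθne _).2 hi)
    simp [heq, hcase, cd3]
  · have h1' : cycleDist 3 i (f θ') = 1 := by
      rw [cd3, if_neg (fun e => hcase e.symm)]
    rw [h1', cd3]
    split <;> omega
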